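/- Let (Ω, F, P) be a probability space and let U, V : Ω → ℝ be independent random variables. Let A, B > 0 and suppose that for every integer k ≥ 1, |U|^k and |V|^k are integrable with E[|U|^k] ≤ A^k k^{k/2} and E[|V|^k] ≤ B^k k^{k/2}. Then for every C > e·A·B, the random variable exp(|UV|/C) is integrable and E[exp(|UV|/C)] ≤ C/(C − eAB). -/

import Mathlib

open MeasureTheory
open scoped BigOperators

/-- Product of two independent sub-Gaussian (in the moment sense) random variables has a
finite exponential moment: if `E|U|^k ≤ A^k k^{k/2}` and `E|V|^k ≤ B^k k^{k/2}` for all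
`k ≥ 1`, then for any `C > e·A·B`, `E exp(|UV|/C) ≤ C/(C - eAB)`. -/
theorem stmt9 {Ω : Type*} [MeasurableSpace Ω] (P : Measure Ω) [IsProbabilityMeasure P]
    (U V : Ω → ℝ) (hU : Measurable U) (hV : Measurable V)
    (hUV : ProbabilityTheory.IndepFun U V P)
    (A B : ℝ) (hA : 0 < A) (hB : 0 < B)
    (hmomU : ∀ k : ℕ, 1 ≤ k → Integrable (fun ω => |U ω| ^ k) P ∧
      ∫ ω, |U ω| ^ k ∂P ≤ A ^ k * (k : ℝ) ^ ((k : ℝ) / 2))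
    (hmomV : ∀ k : ℕ, 1 ≤ k → Integrable (fun ω => |V ω| ^ k) P ∧
      ∫ ω, |V ω| ^ k ∂P ≤ B ^ k * (k : ℝ) ^ ((k : ℝ) / 2)) :
    ∀ C : ℝ, Real.exp 1 * A * B < C →
      Integrable (fun ω => Real.exp (|U ω * V ω| / C)) P ∧
      ∫ ω, Real.exp (|U ω * V ω| / C) ∂P ≤ C / (C - Real.exp 1 * A * B) := by
  intro C hC
  have he : (0:ℝ) < Real.exp 1 := Real.exp_pos 1
  have hC0 : (0:ℝ) < C := lt_trans (by positivity) hC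
  set r : ℝ := Real.exp 1 * A * B / C with hrdef
  have hr0 : 0 < r := by positivity
  have hr1 : r < 1 := (div_lt_one hC0).2 hC
  set F : ℕ → Ω → ℝ := fun k ω => (|U ω * V ω| / C) ^ k / (Nat.factorial k) with hFdef
  have hFnonneg : ∀ k ω, 0 ≤ F k ω := by
    intro k ω
    apply div_nonneg (pow_nonneg (by positivity) k) (by positivity)
  have hFmeas : ∀ k, Measurable (F k) := by
    intro k
    exact (((hU.mul hV).abs.div_const C).pow_const k).div_const _
  -- rewrite F k for k ≥ 1
  have hFeq : ∀ k ω, F k ω = (|U ω| ^ k * |V ω| ^ k) / (C ^ k * Nat.factorial k) := by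
    intro k ω
    simp only [hFdef]
    rw [div_pow, abs_mul, mul_pow]
    ring
  have hfact : ∀ k : ℕ, (0:ℝ) < Nat.factorial k := fun k => by
    exact_mod_cast Nat.factorial_pos k
  -- integrability of each F k
  have hFint : ∀ k, Integrable (F k) P := by
    intro k
    rcases Nat.eq_zero_or_pos k with hk | hk
    · subst hk
      simp only [hFdef, pow_zero, Nat.factorial_zero]
      simpa using integrable_const (1:ℝ)
    · have hind := hUV.comp (measurable_abs.pow_const k) (measurable_abs.pow_const k)
      have := hind.integrable_mul (hmomU k hk).1 (hmomV k hk).1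
      have h2 : Integrable (fun ω => (|U ω| ^ k * |V ω| ^ k) / (C ^ k * Nat.factorial k)) P :=
        this.div_const _
      exact h2.congr (by filter_upwards with ω using (hFeq k ω).symm)
  -- bound on the integral of each F k
  have hterm : ∀ k, ∫ ω, F k ω ∂P ≤ r ^ k := by
    intro k
    rcases Nat.eq_zero_or_pos k with hk | hk
    · subst hk
      simp [hFdef]
    · have hind := hUV.comp (measurable_abs.pow_const k) (measurable_abs.pow_const k)
      have hmul : ∫ ω, |U ω| ^ k * |V ω| ^ k ∂P
          = (∫ ω, |U ω| ^ k ∂P) * ∫ ω, |V ω| ^ k ∂P := by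
        have := hind.integral_fun_mul_eq_mul_integral (hmomU k hk).1.aestronglyMeasurable
          (hmomV k hk).1.aestronglyMeasurable
        simpa [Pi.mul_apply] using this
      have hInt : ∫ ω, F k ω ∂P
          = ((∫ ω, |U ω| ^ k ∂P) * ∫ ω, |V ω| ^ k ∂P) / (C ^ k * Nat.factorial k) := by
        simp_rw [hFeq]
        rw [integral_div, hmul]
      have hUnn : 0 ≤ ∫ ω, |U ω| ^ k ∂P :=
        integral_nonneg fun ω => pow_nonneg (abs_nonneg _) k
      have hVnn : 0 ≤ ∫ ω, |V ω| ^ k ∂P :=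
        integral_nonneg fun ω => pow_nonneg (abs_nonneg _) k
      have hknn : (0:ℝ) < (k:ℝ) := by exact_mod_cast hk
      have hhalf : (k:ℝ) ^ ((k:ℝ)/2) * (k:ℝ) ^ ((k:ℝ)/2) = (k:ℝ) ^ k := by
        rw [← Real.rpow_add hknn, add_halves, Real.rpow_natCast]
      have hprod : (∫ ω, |U ω| ^ k ∂P) * ∫ ω, |V ω| ^ k ∂P
          ≤ (A * B) ^ k * (k:ℝ) ^ k := by
        have := mul_le_mul (hmomU k hk).2 (hmomV k hk).2 hVnn (by positivity)
        calc (∫ ω, |U ω| ^ k ∂P) * ∫ ω, |V ω| ^ k ∂P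
            ≤ (A ^ k * (k:ℝ) ^ ((k:ℝ)/2)) * (B ^ k * (k:ℝ) ^ ((k:ℝ)/2)) := this
          _ = (A * B) ^ k * (k:ℝ) ^ k := by rw [mul_pow]; rw [← hhalf]; ring
      have hfe : ((k:ℝ)) ^ k ≤ Real.exp 1 ^ k * Nat.factorial k := by
        have h1 : ((k:ℝ)) ^ k / (Nat.factorial k) ≤ Real.exp k :=
          Real.pow_div_factorial_le_exp (x := (k:ℝ)) hknn.le k
        rw [div_le_iff₀ (hfact k)] at h1
        calc ((k:ℝ)) ^ k ≤ Real.exp k * Nat.factorial k := h1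
          _ = Real.exp 1 ^ k * Nat.factorial k := by rw [Real.exp_one_pow]
      calc ∫ ω, F k ω ∂P
          = ((∫ ω, |U ω| ^ k ∂P) * ∫ ω, |V ω| ^ k ∂P) / (C ^ k * Nat.factorial k) := hInt
        _ ≤ ((A * B) ^ k * (k:ℝ) ^ k) / (C ^ k * Nat.factorial k) := by
            apply div_le_div_of_nonneg_right hprod (by positivity) |>.trans_eq rfl
        _ ≤ ((A * B) ^ k * (Real.exp 1 ^ k * Nat.factorial k)) / (C ^ k * Nat.factorial k) := by
            apply div_le_div_of_nonneg_right _ (by positivity)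
            exact mul_le_mul_of_nonneg_left hfe (by positivity)
        _ = r ^ k := by
            rw [hrdef]
            rw [div_pow, mul_pow, mul_pow]
            field_simp
            ring
  have hgeo : Summable (fun k : ℕ => r ^ k) :=
    summable_geometric_of_lt_one hr0.le hr1
  have hFintnn : ∀ k, 0 ≤ ∫ ω, F k ω ∂P :=
    fun k => integral_nonneg fun ω => hFnonneg k ω
  have hsum_int : Summable (fun k => ∫ ω, F k ω ∂P) :=
    Summable.of_nonneg_of_le hFintnn hterm hgeo
  -- pointwise: exp (|UV|/C) = ∑' F k
  have hexp : ∀ ω, Real.exp (|U ω * V ω| / C) = ∑' k, F k ω := by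
    intro ω
    rw [Real.exp_eq_exp_ℝ, NormedSpace.exp_eq_tsum_div]
  -- lintegral bound
  have hlin : ∀ k, ∫⁻ ω, ‖F k ω‖₊ ∂P = ENNReal.ofReal (∫ ω, F k ω ∂P) := by
    intro k
    rw [ofReal_integral_eq_lintegral_ofReal (hFint k)
      (Filter.Eventually.of_forall (hFnonneg k))]
    apply lintegral_congr fun ω => ?_
    rw [← enorm_eq_nnnorm, ← ofReal_norm, Real.norm_eq_abs, abs_of_nonneg (hFnonneg k ω)]
  have hf' : ∑' k, ∫⁻ ω, ‖F k ω‖₊ ∂P ≠ ⊤ := by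
    have hle : ∑' k, ∫⁻ ω, ‖F k ω‖₊ ∂P ≤ ∑' k : ℕ, ENNReal.ofReal (r ^ k) := by
      apply ENNReal.tsum_le_tsum fun k => ?_
      rw [hlin k]
      exact ENNReal.ofReal_le_ofReal (hterm k)
    have heq : ∑' k : ℕ, ENNReal.ofReal (r ^ k) = ENNReal.ofReal (∑' k : ℕ, r ^ k) :=
      (ENNReal.ofReal_tsum_of_nonneg (fun k => by positivity) hgeo).symm
    exact ne_top_of_le_ne_top (by rw [heq]; exact ENNReal.ofReal_ne_top) hle
  -- integrability
  have hgmeas : Measurable (fun ω => Real.exp (|U ω * V ω| / C)) :=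
    Real.measurable_exp.comp ((hU.mul hV).abs.div_const C)
  have hgint : Integrable (fun ω => Real.exp (|U ω * V ω| / C)) P := by
    refine ⟨hgmeas.aestronglyMeasurable, ?_⟩
    rw [hasFiniteIntegral_iff_norm]
    have hptw : ∀ ω, ENNReal.ofReal ‖Real.exp (|U ω * V ω| / C)‖
        = ∑' k, ENNReal.ofReal (F k ω) := by
      intro ω
      rw [Real.norm_eq_abs, abs_of_nonneg (Real.exp_pos _).le, hexp ω]
      exact ENNReal.ofReal_tsum_of_nonneg (hFnonneg · ω)
        (Real.summable_pow_div_factorial _)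
    calc ∫⁻ ω, ENNReal.ofReal ‖Real.exp (|U ω * V ω| / C)‖ ∂P
        = ∫⁻ ω, ∑' k, ENNReal.ofReal (F k ω) ∂P := lintegral_congr hptw
      _ = ∑' k, ∫⁻ ω, ENNReal.ofReal (F k ω) ∂P :=
          lintegral_tsum fun k => ((hFmeas k).ennreal_ofReal).aemeasurable
      _ = ∑' k, ∫⁻ ω, ‖F k ω‖₊ ∂P := by
          apply tsum_congr fun k => lintegral_congr fun ω => ?_
          rw [← enorm_eq_nnnorm, ← ofReal_norm, Real.norm_eq_abs, abs_of_nonneg (hFnonneg k ω)]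
      _ < ⊤ := lt_top_iff_ne_top.2 hf'
  refine ⟨hgint, ?_⟩
  have hswap : ∫ ω, Real.exp (|U ω * V ω| / C) ∂P = ∑' k, ∫ ω, F k ω ∂P := by
    rw [show (fun ω => Real.exp (|U ω * V ω| / C)) = fun ω => ∑' k, F k ω from funext hexp]
    · exact integral_tsum (fun k => (hFmeas k).aestronglyMeasurable) hf'
  rw [hswap]
  calc ∑' k, ∫ ω, F k ω ∂P ≤ ∑' k : ℕ, r ^ k := hsum_int.tsum_le_tsum hterm hgeo
    _ = (1 - r)⁻¹ := tsum_geometric_of_lt_one hr0.le hr1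
    _ = C / (C - Real.exp 1 * A * B) := by
        rw [hrdef]
        rw [one_sub_div hC0.ne', inv_div]
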